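/- Creation operators are isometries for the form ⟨·|·⟩: for any words w0, w1 over {x,y}, s ∈ {x,y}, and any valid index i, ⟨w0|w1⟩ = ⟨a*_{s,i} w0 | a*_{s,i} w1⟩. -/

import Mathlib

open scoped Classical

/-- Words over the two-letter alphabet {x,y}; `false` is `x`, `true` is `y`. -/
abbrev Word := List Bool

/-- 0-indexed positions of the x's (`false`) in a word. -/
def xIdx (w : Word) : List ℕ :=
  (List.range w.length).filter (fun j => w.getD j true = false)

/-- 0-indexed positions of the y's (`true`) in a word. -/
def yIdx (w : Word) : List ℕ :=
  (List.range w.length).filter (fun j => w.getD j false = true)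

/-- `fX w i` = number of y's strictly left of the i-th x of `w` (i is 0-indexed). -/
def fX (w : Word) (i : ℕ) : ℕ := (xIdx w).getD i 0 - i

/-- `fY w j` = number of x's strictly left of the j-th y of `w` (j is 0-indexed). -/
def fY (w : Word) (j : ℕ) : ℕ := (yIdx w).getD j 0 - j

/-- `hX w i` = (1-indexed) position of the i-th x of `w` (i is 0-indexed). -/
def hX (w : Word) (i : ℕ) : ℕ := (xIdx w).getD i 0 + 1

/-- The pawn-move partial order: same letter counts, and each x of `w0` lies at a
position at most that of the corresponding x of `w1`. -/
def wle (w0 w1 : Word) : Prop :=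
  w0.count false = w1.count false ∧ w0.count true = w1.count true ∧
  ∀ i < w0.count false, (xIdx w0).getD i 0 ≤ (xIdx w1).getD i 0

/-- Creation operator `a*_{s,i}` on words: `i = 0` prepends `s`; `1 ≤ i ≤ n_s`
replaces the i-th `s` by `ss`; `i = n_s + 1` appends `s`. -/
def create (s : Bool) : ℕ → Word → Word
  | 0, w => s :: w
  | _+1, [] => [s]
  | i+1, a :: w =>
    if a = s then (if i = 0 then s :: s :: w else a :: create s i w)
    else a :: create s (i+1) w

/-- Delete the i-th occurrence (1-indexed) of `s`. -/
def delNth (s : Bool) : ℕ → Word → Word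
  | _, [] => []
  | i, a :: w => if a = s then (if i ≤ 1 then w else a :: delNth s (i-1) w)
                 else a :: delNth s i w

/-- Annihilation operator `a_{s,i}` on words: `i = 0` deletes an initial `s` (else 0);
`1 ≤ i ≤ n_s` deletes the i-th `s`; `i = n_s + 1` deletes a final `s` (else 0). -/
def annih (s : Bool) (i : ℕ) (w : Word) : Option Word :=
  if i = 0 then
    match w with
    | a :: t => if a = s then some t else none
    | [] => none
  else if i ≤ w.count s then some (delNth s i w)
  else if i = w.count s + 1 then
    if w.getLast? = some s then some w.dropLast else none
  else none

/-- The free ℤ-module on words: the Fock space `F`. -/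
abbrev FS := Word →₀ ℤ

/-- Basis vector of a word. -/
noncomputable def δ (w : Word) : FS := Finsupp.single w 1

/-- `0` for `none`, basis vector for `some`. -/
noncomputable def optδ (o : Option Word) : FS := o.elim 0 δ

/-- Extend a word-indexed family of vectors to a linear map on `FS`. -/
noncomputable def opOf (g : Word → FS) : FS →ₗ[ℤ] FS := Finsupp.lift FS ℤ Word g

/-- Creation operator as a linear map. -/
noncomputable def Cr (s : Bool) (i : ℕ) : FS →ₗ[ℤ] FS := opOf (fun w => δ (create s i w))

/-- Annihilation operator as a linear map. -/
noncomputable def An (s : Bool) (i : ℕ) : FS →ₗ[ℤ] FS := opOf (fun w => optδ (annih s i w))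

/-- Boolean bilinear form on words: `1` if `w0 ≤ w1` in the pawn-move order, else `0`. -/
noncomputable def pairW (w0 w1 : Word) : ℤ := if wle w0 w1 then 1 else 0

/-- Bilinear extension of `pairW` to the free module. -/
noncomputable def pairF (u v : FS) : ℤ :=
  u.sum fun w0 a => v.sum fun w1 b => a * b * pairW w0 w1

/-- Kronecker delta form on words. -/
noncomputable def dotW (w0 w1 : Word) : ℤ := if w0 = w1 then 1 else 0

/-- Bilinear extension of `dotW`: words form an orthonormal basis. -/
noncomputable def dotF (u v : FS) : ℤ :=
  u.sum fun w0 a => v.sum fun w1 b => a * b * dotW w0 w1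

/-- All words of a given length. -/
noncomputable def wordsOfLen (n : ℕ) : Finset Word :=
  (Finset.univ : Finset (Fin n → Bool)).image List.ofFn

/-- Swap `xy → yx` at the x's whose (0-indexed) number lies in `T`;
the counter `k` records how many x's have been passed. -/
def psiX (T : Finset ℕ) : Word → ℕ → Word
  | [], _ => []
  | false :: true :: w, k =>
      if k ∈ T then true :: false :: psiX T w (k+1)
      else false :: psiX T (true :: w) (k+1)
  | false :: w, k => false :: psiX T w (k+1)
  | true :: w, k => true :: psiX T w k
  termination_by w _ => w.length
  decreasing_by all_goals (simp <;> omega)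

/-- Swap `yx → xy` at the y's whose (0-indexed) number lies in `T`. -/
def psiY (T : Finset ℕ) : Word → ℕ → Word
  | [], _ => []
  | true :: false :: w, k =>
      if k ∈ T then false :: true :: psiY T w (k+1)
      else true :: psiY T (false :: w) (k+1)
  | true :: w, k => true :: psiY T w (k+1)
  | false :: w, k => false :: psiY T w k
  termination_by w _ => w.length
  decreasing_by all_goals (simp <;> omega)

/-- `Ex w`: 0-indexed numbers of the x's of `w` immediately followed by a y. -/
noncomputable def Ex (w : Word) : Finset ℕ :=
  (Finset.range (w.count false)).filter
    (fun i => w.getD ((xIdx w).getD i 0 + 1) false = true)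

/-- `Ey w`: 0-indexed numbers of the y's of `w` immediately followed by an x. -/
noncomputable def Ey (w : Word) : Finset ℕ :=
  (Finset.range (w.count true)).filter
    (fun i => w.getD ((yIdx w).getD i 0 + 1) true = false)


section Stmt9Aux
def cnt (s : Bool) (w : Word) (k : ℕ) : ℕ := ((w.take k).count s)

lemma cnt_zero (s : Bool) (w : Word) : cnt s w 0 = 0 := by simp [cnt]
lemma cnt_nil (s : Bool) (k : ℕ) : cnt s [] k = 0 := by simp [cnt]
lemma cnt_cons_succ (s a : Bool) (w : Word) (k : ℕ) :
    cnt s (a :: w) (k+1) = (if a = s then 1 else 0) + cnt s w k := by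
  simp [cnt, List.count_cons]
  split <;> [skip; skip] <;> omega

lemma cnt_cons_same (s : Bool) (w : Word) (k : ℕ) : cnt s (s :: w) (k+1) = cnt s w k + 1 := by
  rw [cnt_cons_succ]; simp; omega

lemma cnt_cons_diff {s a : Bool} (h : a ≠ s) (w : Word) (k : ℕ) : cnt s (a :: w) (k+1) = cnt s w k := by
  rw [cnt_cons_succ]; simp [h]

lemma cnt_step (s : Bool) (w : Word) (k : ℕ) :
    cnt s w k ≤ cnt s w (k+1) ∧ cnt s w (k+1) ≤ cnt s w k + 1 := by
  induction w generalizing k with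
  | nil => simp [cnt_nil]
  | cons a t ih =>
    cases k with
    | zero => simp [cnt_zero, cnt_cons_succ]; split <;> simp
    | succ m => simp [cnt_cons_succ]; have := ih m; omega

lemma cnt_mono (s : Bool) (w : Word) {k m : ℕ} (h : k ≤ m) : cnt s w k ≤ cnt s w m := by
  induction m with
  | zero => simp [Nat.le_zero.mp h]
  | succ m ih =>
    rcases Nat.lt_or_ge k (m+1) with h' | h'
    · exact le_trans (ih (by omega)) (cnt_step s w m).1
    · have : k = m + 1 := by omega
      simp [this]

lemma cnt_le_count (s : Bool) (w : Word) (k : ℕ) : cnt s w k ≤ w.count s :=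
  (List.take_sublist k w).count_le s

lemma cnt_of_le (s : Bool) (w : Word) {k : ℕ} (h : w.length ≤ k) : cnt s w k = w.count s := by
  simp [cnt, List.take_of_length_le h]

lemma filter_map_succ (l : List ℕ) (p : ℕ → Bool) :
    (l.map Nat.succ).filter p = (l.filter (fun n => p (n+1))).map Nat.succ := by
  induction l with
  | nil => simp
  | cons a t ih => simp [List.filter_cons, ih]; split <;> simp [ih]

lemma xIdx_cons (a : Bool) (w : Word) :
    xIdx (a :: w) = (if a = false then [0] else []) ++ (xIdx w).map Nat.succ := by
  unfold xIdx
  rw [List.length_cons, List.range_succ_eq_map, List.filter_cons, filter_map_succ]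
  have h1 : ∀ n : ℕ, ((a :: w).getD (n+1) true = false) = (w.getD n true = false) := by
    intro n; simp [List.getD_cons_succ]
  have h2 : (List.filter (fun n => decide ((a :: w).getD (n+1) true = false)) (List.range w.length))
      = (List.filter (fun n => decide (w.getD n true = false)) (List.range w.length)) := by
    apply List.filter_congr; intro n _; simp [List.getD_cons_succ]
  simp only [List.getD_cons_zero]
  cases a <;> simp [h2]

lemma length_xIdx (w : Word) : (xIdx w).length = w.count false := by
  induction w with
  | nil => simp [xIdx]
  | cons a t ih =>
    rw [xIdx_cons]
    simp [List.count_cons, ih]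
    cases a <;> simp [ih] <;> omega

lemma getD_map_succ (l : List ℕ) (j : ℕ) (h : j < l.length) :
    (l.map Nat.succ).getD j 0 = l.getD j 0 + 1 := by
  induction l generalizing j with
  | nil => simp at h
  | cons a t ih =>
    cases j with
    | zero => simp
    | succ m => simp only [List.map_cons, List.getD_cons_succ]; exact ih m (by simpa using h)

lemma xIdx_cons_false (w : Word) : xIdx (false :: w) = 0 :: (xIdx w).map Nat.succ := by
  rw [xIdx_cons]; simp

lemma xIdx_cons_true (w : Word) : xIdx (true :: w) = (xIdx w).map Nat.succ := by
  rw [xIdx_cons]; simp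

lemma bridgeK (w : Word) : ∀ i k, i < w.count false →
    ((xIdx w).getD i 0 < k ↔ i + 1 ≤ cnt false w k) := by
  induction w with
  | nil => simp
  | cons a t ih =>
    intro i k hi
    cases a with
    | false =>
      rw [xIdx_cons_false]
      cases i with
      | zero =>
        simp only [List.getD_cons_zero]
        cases k with
        | zero => simp [cnt_zero]
        | succ m => rw [cnt_cons_same]; simp
      | succ j =>
        have hj : j < t.count false := by simp [List.count_cons] at hi; omega
        simp only [List.getD_cons_succ]
        rw [getD_map_succ _ _ (by rw [length_xIdx]; exact hj)]
        cases k with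
        | zero => simp [cnt_zero]
        | succ m =>
          rw [cnt_cons_same]
          have := ih j m hj
          omega
    | true =>
      have hi' : i < t.count false := by simpa [List.count_cons] using hi
      rw [xIdx_cons_true]
      rw [getD_map_succ _ _ (by rw [length_xIdx]; exact hi')]
      cases k with
      | zero => simp [cnt_zero]
      | succ m =>
        rw [cnt_cons_diff (by simp)]
        have := ih i m hi'
        omega

lemma wle_iff (w0 w1 : Word) :
    wle w0 w1 ↔ (w0.count false = w1.count false ∧ w0.count true = w1.count true ∧
      ∀ k, cnt false w1 k ≤ cnt false w0 k) := by
  constructor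
  · rintro ⟨hc, ht, h⟩
    refine ⟨hc, ht, fun k => ?_⟩
    by_contra hlt
    push_neg at hlt
    set i := cnt false w0 k with hidef
    have hin : i < w1.count false := lt_of_lt_of_le hlt (cnt_le_count _ _ _)
    have h1 : (xIdx w1).getD i 0 < k := (bridgeK w1 i k hin).mpr hlt
    have h0 : ¬ ((xIdx w0).getD i 0 < k) := by
      rw [bridgeK w0 i k (hc ▸ hin)]; omega
    have := h i (hc ▸ hin)
    omega
  · rintro ⟨hc, ht, h⟩
    refine ⟨hc, ht, fun i hi => ?_⟩
    have hi1 : i < w1.count false := hc ▸ hi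
    have h1 : i + 1 ≤ cnt false w1 ((xIdx w1).getD i 0 + 1) :=
      (bridgeK w1 i _ hi1).mp (by omega)
    have h0 : (xIdx w0).getD i 0 < (xIdx w1).getD i 0 + 1 :=
      (bridgeK w0 i _ hi).mpr (le_trans h1 (h _))
    omega

lemma count_not (w : Word) (b : Bool) : (w.map not).count b = w.count (!b) := by
  induction w with
  | nil => simp
  | cons a t ih => cases a <;> cases b <;> simp [List.count_cons, ih]

lemma cnt_not (w : Word) (b : Bool) (k : ℕ) : cnt b (w.map not) k = cnt (!b) w k := by
  induction w generalizing k with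
  | nil => simp [cnt_nil]
  | cons a t ih =>
    cases k with
    | zero => simp [cnt_zero]
    | succ m => rw [List.map_cons, cnt_cons_succ, cnt_cons_succ, ih]; cases a <;> cases b <;> simp

lemma length_counts (w : Word) : w.count false + w.count true = w.length := by
  induction w with
  | nil => simp
  | cons a t ih => cases a <;> simp [List.count_cons] <;> omega

lemma cnt_add (w : Word) (k : ℕ) : cnt false w k + cnt true w k = min k w.length := by
  induction w generalizing k with
  | nil => simp [cnt_nil]
  | cons a t ih =>
    cases k with
    | zero => simp [cnt_zero]
    | succ m =>
      have := ih m
      cases a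
      · rw [cnt_cons_same, cnt_cons_diff (by simp)]; simp only [List.length_cons]; omega
      · rw [cnt_cons_diff (by simp), cnt_cons_same]; simp only [List.length_cons]; omega

lemma wle_compl (w0 w1 : Word) : wle w0 w1 ↔ wle (w1.map not) (w0.map not) := by
  rw [wle_iff, wle_iff]
  simp only [count_not, cnt_not, Bool.not_false, Bool.not_true]
  constructor
  · rintro ⟨hc, ht, h⟩
    have hlen : w0.length = w1.length := by
      have := length_counts w0; have := length_counts w1; omega
    refine ⟨ht.symm, hc.symm, fun k => ?_⟩
    have h0 := cnt_add w0 k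
    have h1 := cnt_add w1 k
    have := h k
    omega
  · rintro ⟨ht, hc, h⟩
    have hlen : w0.length = w1.length := by
      have := length_counts w0; have := length_counts w1; omega
    refine ⟨hc.symm, ht.symm, fun k => ?_⟩
    have h0 := cnt_add w0 k
    have h1 := cnt_add w1 k
    have := h k
    omega

/-- Insertion position of `create s i`. -/
def insPos (s : Bool) : ℕ → Word → ℕ
  | 0, _ => 0
  | _+1, [] => 0
  | i+1, a :: w =>
    if a = s then (if i = 0 then 0 else 1 + insPos s i w)
    else 1 + insPos s (i+1) w

lemma count_create (s t : Bool) (i : ℕ) (w : Word) :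
    (create s i w).count t = w.count t + if t = s then 1 else 0 := by
  induction w generalizing i with
  | nil =>
    cases i <;> simp [create, List.count_cons, List.count_singleton'] <;>
      rcases s <;> rcases t <;> simp
  | cons a w ih =>
    cases i with
    | zero => by_cases h : t = s <;> simp [create, List.count_cons, h] <;> exact Ne.symm h
    | succ j =>
      rw [create]
      by_cases ha : a = s
      · rw [if_pos ha]
        by_cases hj : j = 0
        · rw [if_pos hj]; subst ha
          by_cases h : t = a <;> simp [List.count_cons, h, eq_comm] <;> omega
        · rw [if_neg hj]; simp [List.count_cons, ih]; omega
      · rw [if_neg ha]; simp [List.count_cons, ih]; omega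

lemma create_map_not (s : Bool) (i : ℕ) (w : Word) :
    create (!s) i (w.map not) = (create s i w).map not := by
  induction w generalizing i with
  | nil => cases i <;> simp [create]
  | cons a w ih =>
    cases i with
    | zero => simp [create]
    | succ j =>
      by_cases ha : a = s
      · subst ha
        by_cases hj : j = 0 <;> simp [create, hj, ih]
      · have h1 : ¬((!a) = (!s)) := by simp [ha]
        simp [create, ha, h1, ih]

lemma cnt_create (s : Bool) (w : Word) : ∀ i, i ≤ w.count s + 1 → ∀ k,
    cnt s (create s i w) k =
      if k ≤ insPos s i w then cnt s w k else cnt s w (k-1) + 1 := by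
  induction w with
  | nil =>
    intro i hi k
    have : i = 0 ∨ i = 1 := by simp at hi; omega
    rcases this with h | h <;> subst h <;>
    · cases k with
      | zero => simp [create, insPos, cnt_zero]
      | succ m => simp [create, insPos, cnt_nil, cnt_cons_same, cnt_zero]
  | cons a t ih =>
    intro i hi k
    cases i with
    | zero =>
      cases k with
      | zero => simp [create, insPos, cnt_zero]
      | succ m => simp only [create, insPos, cnt_cons_same]
                  simp [insPos]
    | succ j =>
      rw [create, insPos]
      by_cases ha : a = s
      · subst ha
        rw [if_pos rfl, if_pos rfl]
        by_cases hj : j = 0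
        · rw [if_pos hj, if_pos hj]
          cases k with
          | zero => simp [cnt_zero]
          | succ m => rw [cnt_cons_same, if_neg (by omega)]; simp
        · rw [if_neg hj, if_neg hj]
          have hj' : j ≤ t.count a + 1 := by
            simp [List.count_cons] at hi; omega
          cases k with
          | zero => rw [if_pos (by omega)]; simp [cnt_zero]
          | succ m =>
            rw [cnt_cons_same, ih j hj' m]
            by_cases hm : m ≤ insPos a j t
            · rw [if_pos hm, if_pos (by omega), cnt_cons_same]
            · rw [if_neg hm, if_neg (by omega)]
              have hm1 : 1 ≤ m := by omega
              have : m + 1 - 1 = (m - 1) + 1 := by omega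
              rw [this, cnt_cons_same]
      · rw [if_neg ha, if_neg ha]
        have hj' : j + 1 ≤ t.count s + 1 := by
          simp [List.count_cons, ha] at hi ⊢; omega
        cases k with
        | zero => rw [if_pos (by omega)]; simp [cnt_zero]
        | succ m =>
          rw [cnt_cons_diff ha, ih (j+1) hj' m]
          by_cases hm : m ≤ insPos s (j+1) t
          · rw [if_pos hm, if_pos (by omega), cnt_cons_diff ha]
          · rw [if_neg hm, if_neg (by omega)]
            have : m + 1 - 1 = (m - 1) + 1 := by omega
            rw [this, cnt_cons_diff ha]

lemma insPos_cnt (s : Bool) (w : Word) : ∀ i, 1 ≤ i → i ≤ w.count s + 1 →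
    cnt s w (insPos s i w) = i - 1 := by
  induction w with
  | nil => intro i h1 h2; simp at h2; interval_cases i; simp [insPos, cnt_nil]
  | cons a t ih =>
    intro i h1 h2
    cases i with
    | zero => omega
    | succ j =>
      rw [insPos]
      by_cases ha : a = s
      · subst ha
        rw [if_pos rfl]
        by_cases hj : j = 0
        · rw [if_pos hj, cnt_zero]; omega
        · rw [if_neg hj]
          have : 1 + insPos a j t = insPos a j t + 1 := by omega
          rw [this, cnt_cons_same]
          have h2' : j ≤ t.count a + 1 := by simp [List.count_cons] at h2; omega
          rw [ih j (by omega) h2']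
          omega
      · rw [if_neg ha]
        have : 1 + insPos s (j+1) t = insPos s (j+1) t + 1 := by omega
        rw [this, cnt_cons_diff ha]
        have h2' : j + 1 ≤ t.count s + 1 := by simp [List.count_cons, ha] at h2; omega
        rw [ih (j+1) (by omega) h2']

lemma insPos_cnt_succ (s : Bool) (w : Word) : ∀ i, 1 ≤ i → i ≤ w.count s →
    cnt s w (insPos s i w + 1) = i := by
  induction w with
  | nil => intro i h1 h2; simp at h2; omega
  | cons a t ih =>
    intro i h1 h2
    cases i with
    | zero => omega
    | succ j =>
      rw [insPos]
      by_cases ha : a = s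
      · subst ha
        rw [if_pos rfl]
        by_cases hj : j = 0
        · rw [if_pos hj]; rw [show (0:ℕ)+1 = 0+1 from rfl, cnt_cons_same, cnt_zero]; omega
        · rw [if_neg hj]
          have : 1 + insPos a j t + 1 = (insPos a j t + 1) + 1 := by omega
          rw [this, cnt_cons_same]
          have h2' : j ≤ t.count a := by simp [List.count_cons] at h2; omega
          rw [ih j (by omega) h2']
      · rw [if_neg ha]
        have : 1 + insPos s (j+1) t + 1 = (insPos s (j+1) t + 1) + 1 := by omega
        rw [this, cnt_cons_diff ha]
        have h2' : j + 1 ≤ t.count s := by simp [List.count_cons, ha] at h2; omega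
        rw [ih (j+1) (by omega) h2']

lemma insPos_last (s : Bool) (w : Word) : insPos s (w.count s + 1) w = w.length := by
  induction w with
  | nil => simp [insPos]
  | cons a t ih =>
    by_cases ha : a = s
    · subst ha
      have hc : (a :: t).count a = t.count a + 1 := by simp [List.count_cons]
      rw [hc, insPos]
      rw [if_pos rfl, if_neg (by omega)]
      simp [ih]
      omega
    · have hc : (a :: t).count s = t.count s := by simp [List.count_cons, ha]
      rw [hc, insPos, if_neg ha]
      simp [ih]
      omega

lemma main_ineq (s : Bool) (w0 w1 : Word) (i : ℕ)
    (hc : w1.count s = w0.count s) (hlen : w0.length = w1.length)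
    (hi : i ≤ w0.count s + 1) :
    (∀ k, cnt s w1 k ≤ cnt s w0 k) ↔
      (∀ k, cnt s (create s i w1) k ≤ cnt s (create s i w0) k) := by
  set q0 := insPos s i w0 with hq0def
  set q1 := insPos s i w1 with hq1def
  have C0 := cnt_create s w0 i hi
  have C1 := cnt_create s w1 i (by omega)
  have hz0 : ∀ w : Word, insPos s 0 w = 0 := fun w => by cases w <;> simp [insPos]
  constructor
  · intro H k
    rw [C0 k, C1 k]
    by_cases hk1 : k ≤ q1 <;> by_cases hk0 : k ≤ q0
    · rw [if_pos hk1, if_pos hk0]; exact H k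
    · -- k ≤ q1, k > q0
      rw [if_pos hk1, if_neg hk0]
      rcases Nat.eq_zero_or_pos i with hi0 | hi1
      · subst hi0
        have e0 : q0 = 0 := by rw [hq0def]; exact hz0 w0
        have e1 : q1 = 0 := by rw [hq1def]; exact hz0 w1
        omega
      · have e1 : cnt s w1 q1 = i - 1 := insPos_cnt s w1 i hi1 (by omega)
        have e0 : cnt s w0 q0 = i - 1 := insPos_cnt s w0 i hi1 (by omega)
        have m1 : cnt s w1 k ≤ cnt s w1 q1 := cnt_mono s w1 hk1
        have m0 : cnt s w0 q0 ≤ cnt s w0 (k-1) := cnt_mono s w0 (by omega)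
        omega
    · -- k > q1, k ≤ q0 : impossible
      exfalso
      rcases Nat.eq_zero_or_pos i with hi0 | hi1
      · subst hi0
        have e0 : q0 = 0 := by rw [hq0def]; exact hz0 w0
        have e1 : q1 = 0 := by rw [hq1def]; exact hz0 w1
        omega
      · rcases Nat.lt_or_ge i (w0.count s+1) with hin | hin
        · have e1 : cnt s w1 (q1+1) = i := insPos_cnt_succ s w1 i hi1 (by omega)
          have m1 : cnt s w1 (q1+1) ≤ cnt s w1 k := cnt_mono s w1 (by omega)
          have e0 : cnt s w0 q0 = i - 1 := insPos_cnt s w0 i hi1 (by omega)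
          have m0 : cnt s w0 k ≤ cnt s w0 q0 := cnt_mono s w0 hk0
          have := H k
          omega
        · have hie : i = w0.count s + 1 := by omega
          have hL0 : q0 = w0.length := by rw [hq0def, hie]; exact insPos_last s w0
          have hL1 : q1 = w1.length := by rw [hq1def, hie, ← hc]; exact insPos_last s w1
          omega
    · rw [if_neg hk1, if_neg hk0]
      have := H (k-1)
      omega
  · intro H k
    by_cases hk1 : k ≤ q1 <;> by_cases hk0 : k ≤ q0
    · have Hk := H k
      rw [C0 k, C1 k, if_pos hk1, if_pos hk0] at Hk
      exact Hk
    · -- k ≤ q1, k > q0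
      rcases Nat.eq_zero_or_pos i with hi0 | hi1
      · exfalso; subst hi0
        have e0 : q0 = 0 := by rw [hq0def]; exact hz0 w0
        have e1 : q1 = 0 := by rw [hq1def]; exact hz0 w1
        omega
      · rcases Nat.lt_or_ge i (w0.count s+1) with hin | hin
        · have e1 : cnt s w1 q1 = i - 1 := insPos_cnt s w1 i hi1 (by omega)
          have m1 : cnt s w1 k ≤ cnt s w1 q1 := cnt_mono s w1 hk1
          have e0 : cnt s w0 (q0+1) = i := insPos_cnt_succ s w0 i hi1 (by omega)
          have m0 : cnt s w0 (q0+1) ≤ cnt s w0 k := cnt_mono s w0 (by omega)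
          omega
        · exfalso
          have hie : i = w0.count s + 1 := by omega
          have hL0 : q0 = w0.length := by rw [hq0def, hie]; exact insPos_last s w0
          have hL1 : q1 = w1.length := by rw [hq1def, hie, ← hc]; exact insPos_last s w1
          omega
    · -- k > q1, k ≤ q0
      have Hk1 := H (k+1)
      rw [C0 (k+1), C1 (k+1), if_neg (by omega)] at Hk1
      simp only [Nat.add_sub_cancel] at Hk1
      by_cases hk0' : k + 1 ≤ q0
      · rw [if_pos hk0'] at Hk1
        have st := (cnt_step s w0 k).2
        omega
      · rw [if_neg hk0'] at Hk1
        omega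
    · have Hk1 := H (k+1)
      rw [C0 (k+1), C1 (k+1), if_neg (by omega), if_neg (by omega)] at Hk1
      simp only [Nat.add_sub_cancel] at Hk1
      omega

lemma wle_create_false (w0 w1 : Word) (i : ℕ)
    (h0 : i ≤ w0.count false + 1) (h1 : i ≤ w1.count false + 1) :
    (wle w0 w1 ↔ wle (create false i w0) (create false i w1)) := by
  by_cases hcf : w0.count false = w1.count false
  · by_cases hct : w0.count true = w1.count true
    · have hlen : w0.length = w1.length := by
        have := length_counts w0; have := length_counts w1; omega
      have key := main_ineq false w0 w1 i hcf.symm hlen h0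
      rw [wle_iff, wle_iff]
      simp only [count_create]
      constructor
      · rintro ⟨-, -, h⟩
        exact ⟨by omega, by omega, key.mp h⟩
      · rintro ⟨-, -, h⟩
        exact ⟨by omega, by omega, key.mpr h⟩
    · apply iff_of_false
      · exact fun h => hct h.2.1
      · intro h
        have := h.2.1
        simp only [count_create] at this
        exact hct (by omega)
  · apply iff_of_false
    · exact fun h => hcf h.1
    · intro h
      have := h.1
      simp only [count_create] at this
      exact hcf (by omega)

lemma wle_create (s : Bool) (i : ℕ) (w0 w1 : Word)
    (h0 : i ≤ w0.count s + 1) (h1 : i ≤ w1.count s + 1) :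
    (wle w0 w1 ↔ wle (create s i w0) (create s i w1)) := by
  cases s
  · exact wle_create_false w0 w1 i h0 h1
  · rw [wle_compl w0 w1]
    have h0' : i ≤ (w1.map not).count false + 1 := by
      rw [count_not]; simpa using h1
    have h1' : i ≤ (w0.map not).count false + 1 := by
      rw [count_not]; simpa using h0
    rw [wle_create_false (w1.map not) (w0.map not) i h0' h1']
    have e1 : create false i (w1.map not) = (create true i w1).map not := by
      simpa using create_map_not true i w1
    have e0 : create false i (w0.map not) = (create true i w0).map not := by
      simpa using create_map_not true i w0
    rw [e1, e0, ← wle_compl]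

end Stmt9Aux

/-- Creation operators are isometries for `⟨·|·⟩`:
`⟨w0|w1⟩ = ⟨a*_{s,i} w0 | a*_{s,i} w1⟩` for any valid index `i`. -/
theorem stmt9 (s : Bool) (i : ℕ) (w0 w1 : Word)
    (h0 : i ≤ w0.count s + 1) (h1 : i ≤ w1.count s + 1) :
    pairW w0 w1 = pairW (create s i w0) (create s i w1) := by
  simp only [pairW]
  exact if_congr (wle_create s i w0 w1 h0 h1) rfl rfl
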